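/- arXiv:1801.02908 — 7 statements merged into one kernel-verified Lean document; each statement's English description precedes it below -/
import Mathlib

section
/- Let v be a nonnegative real random variable, let t ≥ 0, and let δ ∈ (0,1] satisfy δ ≥ 2·Pr[v > t]. Let h = ⌈1/δ⌉ and let v¹, …, v^h be independent copies of v. Then sup_{π>0} π·Pr[v·1[v>t] > π] ≤ 2δ · sup_{π>0} π·Pr[max_{1≤i≤h} v^i > π]. (In words: the optimal posted-price revenue from the truncated-to-the-tail value v·1[v>t] is at most 2δ times the optimal revenue of posting a single price to ⌈1/δ⌉ i.i.d. buyers.) -/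
open MeasureTheory ProbabilityTheory Set

lemma key_real (p δ : ℝ) (hp0 : 0 ≤ p) (hp1 : p ≤ 1) (hδ0 : 0 < δ) (hpδ : p ≤ δ)
    (h : ℕ) (hhδ : 1 ≤ (h : ℝ) * δ) :
    p ≤ 2 * δ * (1 - (1 - p) ^ h) := by
  have h1 : (1 - p) ^ h * (1 + p) ^ h ≤ 1 := by
    rw [← mul_pow]
    have e : (1 - p) * (1 + p) = 1 - p ^ 2 := by ring
    rw [e]
    apply pow_le_one₀ <;> nlinarith
  have h2 : 1 + (h : ℝ) * p ≤ (1 + p) ^ h := one_add_mul_le_pow (by linarith) h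
  have h3 : 0 < 1 + (h : ℝ) * p := by positivity
  have h4 : (1 - p) ^ h ≤ 1 / (1 + (h : ℝ) * p) := by
    rw [le_div_iff₀ h3]
    calc (1 - p) ^ h * (1 + (h : ℝ) * p) ≤ (1 - p) ^ h * (1 + p) ^ h := by
          apply mul_le_mul_of_nonneg_left h2
          exact pow_nonneg (by linarith) h
      _ ≤ 1 := h1
  have h5 : 1 / (1 + (h : ℝ) * p) ≤ 1 - p / (2 * δ) := by
    rw [div_le_iff₀ h3]
    have hhp : 1 ≤ (h:ℝ) * (2 * δ - p) := by
      have : (h:ℝ) * δ ≤ (h:ℝ) * (2 * δ - p) :=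
        mul_le_mul_of_nonneg_left (by linarith) (by positivity)
      linarith
    have key : 0 ≤ p * ((h:ℝ) * (2*δ - p) - 1) := mul_nonneg hp0 (by linarith)
    have hδ' : 0 < 2 * δ := by linarith
    have e : (1 - p / (2*δ)) * (1 + (h:ℝ) * p)
        = 1 + (p * ((h:ℝ)*(2*δ-p) - 1)) / (2*δ) := by
      field_simp
      ring
    rw [e]
    have : 0 ≤ (p * ((h:ℝ)*(2*δ-p) - 1)) / (2*δ) := by positivity
    linarith
  have h6 : (1 - p) ^ h ≤ 1 - p / (2 * δ) := h4.trans h5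
  have hδ' : 0 < 2 * δ := by linarith
  have : p / (2*δ) ≤ 1 - (1-p)^h := by linarith
  calc p = 2 * δ * (p / (2*δ)) := by field_simp
    _ ≤ 2 * δ * (1 - (1-p)^h) := by apply mul_le_mul_of_nonneg_left this (le_of_lt hδ')

/-- **Lemma `addbuyers`.** If `δ ≥ 2·Pr[v > t]`, then the optimal posted-price revenue
from the truncated value `v·1[v>t]` is at most `2δ` times the optimal posted-price
revenue from `h = ⌈1/δ⌉` i.i.d. copies of `v`. -/
theorem stmt_0 {Ω : Type*} [MeasurableSpace Ω] (μ : Measure Ω) [IsProbabilityMeasure μ]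
    (v : Ω → ℝ) (hv : Measurable v) (hv0 : ∀ ω, 0 ≤ v ω)
    (t : ℝ) (ht : 0 ≤ t) (δ : ℝ) (hδ0 : 0 < δ) (hδ1 : δ ≤ 1)
    (hδ : 2 * (μ {ω | t < v ω}).toReal ≤ δ)
    (h : ℕ) (hh : h = ⌈1 / δ⌉₊)
    (vs : Fin h → Ω → ℝ) (hmeas : ∀ i, Measurable (vs i))
    (hindep : iIndepFun vs μ)
    (hid : ∀ i, IdentDistrib (vs i) v μ μ) :
    (⨆ π ∈ Ioi (0 : ℝ), ENNReal.ofReal π * μ {ω | π < (if t < v ω then v ω else 0)})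
      ≤ ENNReal.ofReal (2 * δ) *
        (⨆ π ∈ Ioi (0 : ℝ), ENNReal.ofReal π * μ {ω | ∃ i, π < vs i ω}) := by
  have hhδ : 1 ≤ (h : ℝ) * δ := by
    have h1 : (1 : ℝ) / δ ≤ (⌈1 / δ⌉₊ : ℝ) := Nat.le_ceil _
    rw [hh]
    calc (1 : ℝ) = (1/δ) * δ := by field_simp
      _ ≤ (⌈1 / δ⌉₊ : ℝ) * δ := by
          apply mul_le_mul_of_nonneg_right h1 (le_of_lt hδ0)
  refine iSup₂_le fun π hπ => ?_
  have hπ0 : (0 : ℝ) < π := hπ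
  set s := max t π with hs
  -- rewrite the truncated event
  have hA : {ω | π < (if t < v ω then v ω else 0)} = {ω | s < v ω} := by
    ext ω
    simp only [mem_setOf_eq, hs, max_lt_iff]
    split_ifs with htv
    · tauto
    · constructor
      · intro hc; linarith
      · tauto
  rw [hA]
  -- key quantities
  have hmA : MeasurableSet {ω | s < v ω} := measurableSet_lt measurable_const hv
  set p := (μ {ω | s < v ω}).toReal with hp
  have hp0 : 0 ≤ p := ENNReal.toReal_nonneg
  have hμne : μ {ω | s < v ω} ≠ ⊤ := measure_ne_top μ _
  have hp1 : p ≤ 1 := by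
    rw [hp]
    exact ENNReal.toReal_le_of_le_ofReal zero_le_one (by simpa using prob_le_one)
  have hpδ : p ≤ δ := by
    have hsub : {ω | s < v ω} ⊆ {ω | t < v ω} :=
      fun ω hw => lt_of_le_of_lt (le_max_left t π) hw
    have h1 : (μ {ω | s < v ω}).toReal ≤ (μ {ω | t < v ω}).toReal :=
      ENNReal.toReal_mono (measure_ne_top μ _) (measure_mono hsub)
    linarith
  -- the product formula
  have hFset : ∀ i, {ω | vs i ω ≤ s} = (vs i) ⁻¹' (Iic s) := fun i => rfl
  have hprod : μ (⋂ i, {ω | vs i ω ≤ s}) = (μ {ω | v ω ≤ s}) ^ h := by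
    simp only [hFset]
    rw [hindep.meas_iInter (fun i => ⟨Iic s, measurableSet_Iic, rfl⟩)]
    have heq : ∀ i : Fin h, μ (vs i ⁻¹' Iic s) = μ {ω | v ω ≤ s} := by
      intro i
      have := (hid i).measure_mem_eq (s := Iic s) measurableSet_Iic
      simpa [Set.preimage, Iic] using this
    simp [heq, Finset.prod_const, Finset.card_univ]
  have hcompl : {ω | v ω ≤ s} = {ω | s < v ω}ᶜ := by
    ext ω; simp [not_lt]
  have hF : μ {ω | v ω ≤ s} = 1 - μ {ω | s < v ω} := by
    rw [hcompl, prob_compl_eq_one_sub hmA]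
  have hFr : (μ {ω | v ω ≤ s}).toReal = 1 - p := by
    rw [hF, ENNReal.toReal_sub_of_le (by simpa using prob_le_one) ENNReal.one_ne_top]
    simp [hp]
  -- the event with h buyers at price s
  have hmI : MeasurableSet (⋂ i, {ω | vs i ω ≤ s}) :=
    MeasurableSet.iInter fun i => measurableSet_le (hmeas i) measurable_const
  have hBc : {ω | ∃ i, s < vs i ω} = (⋂ i, {ω | vs i ω ≤ s})ᶜ := by
    ext ω; simp [not_le, not_forall, not_lt]
  have hB' : μ {ω | ∃ i, s < vs i ω} = 1 - (μ {ω | v ω ≤ s}) ^ h := by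
    rw [hBc, prob_compl_eq_one_sub hmI, hprod]
  have hFle : (μ {ω | v ω ≤ s}) ^ h ≤ 1 := by
    apply pow_le_one' (by simpa using prob_le_one)
  have hB'r : (μ {ω | ∃ i, s < vs i ω}).toReal = 1 - (1 - p) ^ h := by
    rw [hB', ENNReal.toReal_sub_of_le hFle ENNReal.one_ne_top, ENNReal.toReal_pow, hFr]
    simp
  -- key inequality in ENNReal
  have hkey : μ {ω | s < v ω} ≤ ENNReal.ofReal (2 * δ) * μ {ω | ∃ i, π < vs i ω} := by
    have hsubB : {ω | ∃ i, s < vs i ω} ⊆ {ω | ∃ i, π < vs i ω} := by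
      rintro ω ⟨i, hi⟩
      exact ⟨i, lt_of_le_of_lt (le_max_right t π) hi⟩
    have h1 : μ {ω | s < v ω} = ENNReal.ofReal p := by
      rw [hp, ENNReal.ofReal_toReal hμne]
    have h2 : ENNReal.ofReal (2 * δ * (1 - (1 - p) ^ h))
        ≤ ENNReal.ofReal (2 * δ) * μ {ω | ∃ i, π < vs i ω} := by
      rw [← hB'r]
      rw [ENNReal.ofReal_mul (by linarith)]
      apply mul_le_mul_right ?_ _
      rw [ENNReal.ofReal_toReal (measure_ne_top μ _)]
      exact measure_mono hsubB
    calc μ {ω | s < v ω} = ENNReal.ofReal p := h1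
      _ ≤ ENNReal.ofReal (2 * δ * (1 - (1 - p) ^ h)) :=
          ENNReal.ofReal_le_ofReal (key_real p δ hp0 hp1 hδ0 hpδ h hhδ)
      _ ≤ _ := h2
  calc ENNReal.ofReal π * μ {ω | s < v ω}
      ≤ ENNReal.ofReal π * (ENNReal.ofReal (2 * δ) * μ {ω | ∃ i, π < vs i ω}) :=
        mul_le_mul_right hkey _
    _ = ENNReal.ofReal (2 * δ) * (ENNReal.ofReal π * μ {ω | ∃ i, π < vs i ω}) := by ring
    _ ≤ ENNReal.ofReal (2 * δ) *
        (⨆ π ∈ Ioi (0 : ℝ), ENNReal.ofReal π * μ {ω | ∃ i, π < vs i ω}) := by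
        apply mul_le_mul_right
        exact le_iSup₂ (f := fun π (_ : π ∈ Ioi (0:ℝ)) => ENNReal.ofReal π * μ {ω | ∃ i, π < vs i ω}) π hπ
end

section
/- Let v be a nonnegative real random variable, let γ > 0 and t ≥ 1 be reals, and suppose (i) Pr[v ≤ t·γ] = 1 and (ii) p·Pr[v > p] ≤ γ for every p > 0. Then Var(v) ≤ (2t − 1)·γ². -/
open MeasureTheory ProbabilityTheory Set

/-- **Li–Yao variance lemma (`boundVar`).** A nonnegative value supported on `[0, t·γ]`
whose posted-price revenue is at most `γ` for every price has variance at most `(2t−1)·γ²`. -/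
theorem stmt_5 {Ω : Type*} [MeasurableSpace Ω] (μ : Measure Ω) [IsProbabilityMeasure μ]
    (v : Ω → ℝ) (hv : Measurable v) (hv0 : ∀ ω, 0 ≤ v ω)
    (γ t : ℝ) (hγ : 0 < γ) (ht : 1 ≤ t)
    (hsupp : μ {ω | v ω ≤ t * γ} = 1)
    (hrev : ∀ p, 0 < p → p * (μ {ω | p < v ω}).toReal ≤ γ) :
    variance v μ ≤ (2 * t - 1) * γ ^ 2 := by
  have htγ : 0 < t * γ := mul_pos (lt_of_lt_of_le one_pos ht) hγ
  have hγtγ : γ ≤ t * γ := le_mul_of_one_le_left hγ.le ht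
  -- a.e. bound on v
  have hae : ∀ᵐ ω ∂μ, v ω ≤ t * γ := by
    have : μ {ω | v ω ≤ t * γ}ᶜ = 0 := by
      rw [measure_compl (measurableSet_le hv measurable_const)
        (measure_ne_top μ _), hsupp, measure_univ]
      simp
    filter_upwards [measure_eq_zero_iff_ae_notMem.mp this] with ω hω
    simpa using hω
  have hmem : MemLp v 2 μ := MemLp.of_bound hv.aestronglyMeasurable (t * γ)
    (by filter_upwards [hae] with ω h using by rw [Real.norm_eq_abs, abs_of_nonneg (hv0 ω)]; exact h)
  -- tail measure vanishes above t*γ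
  have htail : μ {ω | t * γ < v ω} = 0 := by
    have : {ω | t * γ < v ω} = {ω | v ω ≤ t * γ}ᶜ := by ext ω; simp [not_le]
    rw [this, measure_compl (measurableSet_le hv measurable_const) (measure_ne_top μ _), hsupp,
      measure_univ]
    simp
  -- layer cake for the second moment
  have hlc : ∫⁻ ω, ENNReal.ofReal (v ω ^ 2) ∂μ
      = ∫⁻ p in Ioi (0:ℝ), μ {ω | p < v ω} * ENNReal.ofReal (2 * p) := by
    have key := lintegral_comp_eq_lintegral_meas_lt_mul μ (f := v) (g := fun s => 2 * s)
      (Filter.Eventually.of_forall hv0) hv.aemeasurable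
      (fun s _ => (continuous_const.mul continuous_id).intervalIntegrable 0 s)
      ((ae_restrict_mem measurableSet_Ioi).mono fun s hs => by
        have : (0:ℝ) < s := hs
        positivity)
    rw [← key]
    apply lintegral_congr fun ω => ?_
    congr 1
    rw [intervalIntegral.integral_const_mul, integral_id]
    ring
  -- bound the tail integral
  have hsplit : ∫⁻ p in Ioi (0:ℝ), μ {ω | p < v ω} * ENNReal.ofReal (2 * p)
      ≤ ENNReal.ofReal ((2 * t - 1) * γ ^ 2) := by
    rw [← Ioc_union_Ioi_eq_Ioi htγ.le,
      lintegral_union measurableSet_Ioi Ioc_disjoint_Ioi_same]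
    have hzero : ∫⁻ p in Ioi (t * γ), μ {ω | p < v ω} * ENNReal.ofReal (2 * p) = 0 := by
      rw [setLIntegral_congr_fun_ae measurableSet_Ioi (g := fun _ => 0)
        (Filter.Eventually.of_forall fun p hp => by
          have : μ {ω | p < v ω} = 0 :=
            measure_mono_null (fun ω (hω : p < v ω) => lt_trans (mem_Ioi.mp hp) hω) htail
          simp [this])]
      simp
    rw [hzero, add_zero, ← Ioc_union_Ioc_eq_Ioc hγ.le hγtγ,
      lintegral_union measurableSet_Ioc (Ioc_disjoint_Ioc_of_le le_rfl)]
    have h1 : ∫⁻ p in Ioc (0:ℝ) γ, μ {ω | p < v ω} * ENNReal.ofReal (2 * p)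
        ≤ ENNReal.ofReal (γ ^ 2) := by
      have hb : ∫⁻ p in Ioc (0:ℝ) γ, μ {ω | p < v ω} * ENNReal.ofReal (2 * p)
          ≤ ∫⁻ p in Ioc (0:ℝ) γ, ENNReal.ofReal (2 * p) := by
        refine lintegral_mono fun p => ?_
        calc μ {ω | p < v ω} * ENNReal.ofReal (2 * p)
            ≤ 1 * ENNReal.ofReal (2 * p) := by
              gcongr; exact prob_le_one
          _ = ENNReal.ofReal (2 * p) := one_mul _
      refine hb.trans ?_
      rw [← ofReal_integral_eq_lintegral_ofReal]
      · rw [← intervalIntegral.integral_of_le hγ.le, intervalIntegral.integral_const_mul]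
        simp [integral_id]
        rw [← ENNReal.ofReal_ofNat 2, ← ENNReal.ofReal_mul (by norm_num)]
        rw [ENNReal.ofReal_le_ofReal_iff (by positivity)]
        ring_nf
        simp
      · exact (ContinuousOn.integrableOn_compact isCompact_Icc
          (continuous_const.mul continuous_id).continuousOn).mono_set Ioc_subset_Icc_self
      · filter_upwards [ae_restrict_mem measurableSet_Ioc] with p hp
        have := hp.1; positivity
    have h2 : ∫⁻ p in Ioc γ (t * γ), μ {ω | p < v ω} * ENNReal.ofReal (2 * p)
        ≤ ENNReal.ofReal ((2 * t - 2) * γ ^ 2) := by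
      have hb : ∀ p ∈ Ioc γ (t * γ), μ {ω | p < v ω} * ENNReal.ofReal (2 * p)
          ≤ ENNReal.ofReal (2 * γ) := by
        intro p hp
        have hp0 : 0 < p := lt_trans hγ hp.1
        have hμ : μ {ω | p < v ω} ≤ ENNReal.ofReal (γ / p) := by
          rw [← ENNReal.ofReal_toReal (measure_ne_top μ {ω | p < v ω})]
          apply ENNReal.ofReal_le_ofReal
          rw [le_div_iff₀ hp0, mul_comm]
          exact hrev p hp0
        calc μ {ω | p < v ω} * ENNReal.ofReal (2 * p)
            ≤ ENNReal.ofReal (γ / p) * ENNReal.ofReal (2 * p) := by gcongr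
          _ = ENNReal.ofReal (γ / p * (2 * p)) := by
              rw [← ENNReal.ofReal_mul (show (0:ℝ) ≤ γ / p by positivity)]
          _ = ENNReal.ofReal (2 * γ) := by
              congr 1; field_simp
      calc ∫⁻ p in Ioc γ (t * γ), μ {ω | p < v ω} * ENNReal.ofReal (2 * p)
          ≤ ∫⁻ _ in Ioc γ (t * γ), ENNReal.ofReal (2 * γ) := by
            refine setLIntegral_mono (by fun_prop) hb
        _ = ENNReal.ofReal (2 * γ) * volume (Ioc γ (t * γ)) := by
            rw [setLIntegral_const]
        _ = ENNReal.ofReal (2 * γ) * ENNReal.ofReal (t * γ - γ) := by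
            rw [Real.volume_Ioc]
        _ = ENNReal.ofReal (2 * γ * (t * γ - γ)) := by
            rw [← ENNReal.ofReal_mul (by positivity)]
        _ = ENNReal.ofReal ((2 * t - 2) * γ ^ 2) := by ring_nf
    calc _ ≤ ENNReal.ofReal (γ ^ 2) + ENNReal.ofReal ((2 * t - 2) * γ ^ 2) := add_le_add h1 h2
      _ = ENNReal.ofReal (γ ^ 2 + (2 * t - 2) * γ ^ 2) := by
          rw [← ENNReal.ofReal_add (by positivity) (by nlinarith)]
      _ = ENNReal.ofReal ((2 * t - 1) * γ ^ 2) := by ring_nf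
  -- combine
  have hsq : ∫ ω, v ω ^ 2 ∂μ ≤ (2 * t - 1) * γ ^ 2 := by
    rw [integral_eq_lintegral_of_nonneg_ae
      (Filter.Eventually.of_forall fun ω => by positivity)
      ((hv.pow_const 2).aestronglyMeasurable)]
    exact ENNReal.toReal_le_of_le_ofReal (by nlinarith) (hlc ▸ hsplit)
  have hvar := variance_eq_sub hmem
  have hEsq : (0:ℝ) ≤ (∫ ω, v ω ∂μ) ^ 2 := sq_nonneg _
  calc variance v μ = (∫ ω, v ω ^ 2 ∂μ) - (∫ ω, v ω ∂μ) ^ 2 := by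
        rw [hvar]; rfl
    _ ≤ ∫ ω, v ω ^ 2 ∂μ := by linarith
    _ ≤ (2 * t - 1) * γ ^ 2 := hsq
end

section
/- Let D : [0,1] → ℝ be nondecreasing and nonnegative, and suppose the revenue curve R(q) := (1−q)·D(q) is concave on [0,1]. Let ε₁ ∈ (0,1), ε₂ ∈ (0,1), and let k ≥ 1 be an integer with ε₁·ε₂^{−k} < 1. Then ∫_0^{1−ε₁} D(q) dq ≥ k·(1−ε₂)·(1 − ε₁·ε₂^{−k}) · sup_{β ∈ [0,ε₁]} R(1−β). -/
open Set

/-- **Lemma `CoreToTailRegular`.** For a nondecreasing nonnegative demand curve `D` on `[0,1]`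
whose revenue curve `R(q) = (1−q)·D(q)` is concave, with `ε₁, ε₂ ∈ (0,1)`, `k ≥ 1` and
`ε₁·ε₂^{−k} < 1`, the core contribution `∫₀^{1−ε₁} D(q) dq` is at least
`k·(1−ε₂)·(1 − ε₁·ε₂^{−k})` times the tail revenue `sup_{β ∈ [0,ε₁]} R(1−β)`. -/
theorem stmt_9 (D : ℝ → ℝ) (hD : MonotoneOn D (Icc (0 : ℝ) 1))
    (hD0 : ∀ q ∈ Icc (0 : ℝ) 1, 0 ≤ D q)
    (hconc : ConcaveOn ℝ (Icc (0 : ℝ) 1) (fun q => (1 - q) * D q))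
    (ε₁ ε₂ : ℝ) (hε₁ : ε₁ ∈ Ioo (0 : ℝ) 1) (hε₂ : ε₂ ∈ Ioo (0 : ℝ) 1)
    (k : ℕ) (hk : 1 ≤ k) (hsmall : ε₁ / ε₂ ^ k < 1) :
    (k : ℝ) * (1 - ε₂) * (1 - ε₁ / ε₂ ^ k) *
        sSup ((fun β => (1 - (1 - β)) * D (1 - β)) '' Icc (0 : ℝ) ε₁)
      ≤ ∫ q in (0 : ℝ)..(1 - ε₁), D q := by
  obtain ⟨hε₁0, hε₁1⟩ := hε₁
  obtain ⟨hε₂0, hε₂1⟩ := hε₂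
  set S := sSup ((fun β => (1 - (1 - β)) * D (1 - β)) '' Icc (0 : ℝ) ε₁) with hSdef
  have hpow : ∀ j : ℕ, (0:ℝ) < ε₂ ^ j := fun j => pow_pos hε₂0 j
  set q : ℕ → ℝ := fun j => 1 - ε₁ / ε₂ ^ j with hqdef
  -- monotonicity of q (antitone)
  have hqanti : ∀ i j : ℕ, i ≤ j → q j ≤ q i := by
    intro i j hij
    have h1 : ε₂ ^ j ≤ ε₂ ^ i := pow_le_pow_of_le_one hε₂0.le hε₂1.le hij
    have : ε₁ / ε₂ ^ i ≤ ε₁ / ε₂ ^ j :=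
      div_le_div_of_nonneg_left hε₁0.le (hpow j) h1
    simp only [hqdef]
    linarith
  have hqk_pos : 0 < q k := by simp only [hqdef]; linarith
  have hq0 : q 0 = 1 - ε₁ := by simp [hqdef]
  have hqle1 : ∀ j : ℕ, q j ≤ 1 - ε₁ := by
    intro j
    have := hqanti 0 j (Nat.zero_le j)
    rwa [hq0] at this
  have hqmem : ∀ j : ℕ, j ≤ k → q j ∈ Icc (0:ℝ) 1 := by
    intro j hj
    exact ⟨le_trans hqk_pos.le (hqanti j k hj), by linarith [hqle1 j, hε₁0]⟩
  -- image nonempty and bounded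
  have hmem0 : (0:ℝ) ∈ ((fun β => (1 - (1 - β)) * D (1 - β)) '' Icc (0 : ℝ) ε₁) := by
    refine ⟨0, ⟨le_refl 0, hε₁0.le⟩, by ring⟩
  have hne : ((fun β => (1 - (1 - β)) * D (1 - β)) '' Icc (0 : ℝ) ε₁).Nonempty := ⟨0, hmem0⟩
  have hbdd : BddAbove ((fun β => (1 - (1 - β)) * D (1 - β)) '' Icc (0 : ℝ) ε₁) := by
    refine ⟨ε₁ * D 1, ?_⟩
    rintro y ⟨β, ⟨hβ0, hβ1⟩, rfl⟩
    have h1β : (1 - β) ∈ Icc (0:ℝ) 1 := ⟨by linarith, by linarith⟩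
    have hD1 : D (1 - β) ≤ D 1 := hD h1β (by norm_num) (by linarith)
    have hnn := hD0 _ h1β
    show (1 - (1 - β)) * D (1 - β) ≤ ε₁ * D 1
    nlinarith [hD0 (1:ℝ) (by norm_num : (1:ℝ) ∈ Icc (0:ℝ) 1)]
  have hS0 : 0 ≤ S := le_csSup hbdd hmem0
  -- key concavity bound
  have hkey : ∀ x : ℝ, 0 < x → x ≤ 1 - ε₁ → x * S ≤ (1 - x) * D x := by
    intro x hx hx1
    rw [mul_comm, ← le_div_iff₀ hx]
    refine csSup_le hne ?_
    rintro y ⟨β, ⟨hβ0, hβ1⟩, rfl⟩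
    rw [le_div_iff₀ hx]
    show (1 - (1 - β)) * D (1 - β) * x ≤ (1 - x) * D x
    have hβlt : β < 1 := lt_of_le_of_lt hβ1 hε₁1
    have h1β : 0 < 1 - β := by linarith
    set b : ℝ := x / (1 - β) with hbdef
    have hb0 : 0 ≤ b := le_of_lt (div_pos hx h1β)
    have hb1 : b ≤ 1 := by
      rw [hbdef, div_le_one h1β]; linarith
    have ha0 : (0:ℝ) ≤ 1 - b := by linarith
    have hcomb := hconc.2 (x := (0:ℝ)) (y := 1 - β)
      (by norm_num : (0:ℝ) ∈ Icc (0:ℝ) 1) (⟨by linarith, by linarith⟩)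
      ha0 hb0 (by ring)
    have hxeq : (1 - b) • (0:ℝ) + b • (1 - β) = x := by
      rw [smul_eq_mul, smul_eq_mul, hbdef]
      field_simp
      ring
    rw [hxeq] at hcomb
    simp only [smul_eq_mul] at hcomb
    have hD0' : 0 ≤ D 0 := hD0 0 (by norm_num)
    have h2 : b * ((1 - (1 - β)) * D (1 - β)) ≤ (1 - x) * D x := by
      nlinarith
    have h3 : x * ((1 - (1 - β)) * D (1 - β)) ≤ b * ((1 - (1 - β)) * D (1 - β)) := by
      have hxb : x ≤ b := by
        rw [hbdef, le_div_iff₀ h1β]; nlinarith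
      have hnn : 0 ≤ (1 - (1 - β)) * D (1 - β) := by
        have := hD0 (1 - β) ⟨by linarith, by linarith⟩
        nlinarith
      nlinarith
    nlinarith
  -- integrability
  have hInt : ∀ a b : ℝ, 0 ≤ a → b ≤ 1 → a ≤ b → IntervalIntegrable D MeasureTheory.volume a b := by
    intro a b ha hb hab
    apply MonotoneOn.intervalIntegrable
    apply hD.mono
    rw [uIcc_of_le hab]
    exact Icc_subset_Icc ha hb
  -- adjacent points a i = q (k - i)
  set a : ℕ → ℝ := fun i => q (k - i) with hadef
  have haInt : ∀ i, i < k → IntervalIntegrable D MeasureTheory.volume (a i) (a (i+1)) := by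
    intro i hi
    apply hInt
    · exact le_trans hqk_pos.le (hqanti (k - i) k (Nat.sub_le k i))
    · linarith [hqle1 (k - (i+1)), hε₁0]
    · exact hqanti (k - (i+1)) (k - i) (Nat.sub_le_sub_left (Nat.le_succ i) k)
  have hsum := intervalIntegral.sum_integral_adjacent_intervals (f := D)
    (μ := MeasureTheory.volume) (a := a) (n := k) haInt
  have ha0 : a 0 = q k := by simp [hadef]
  have hak : a k = 1 - ε₁ := by simp [hadef, hq0]
  rw [ha0, hak] at hsum
  -- each term bound
  have hterm : ∀ i ∈ Finset.range k,
      (1 - ε₂) * (1 - ε₁ / ε₂ ^ k) * S ≤ ∫ x in (a i)..(a (i+1)), D x := by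
    intro i hi
    rw [Finset.mem_range] at hi
    set j : ℕ := k - i with hjdef
    have hj1 : 1 ≤ j := by omega
    have hji : k - (i+1) = j - 1 := by omega
    have hstep : a (i+1) - a i = (1 - ε₂) * (ε₁ / ε₂ ^ j) := by
      simp only [hadef, hji, hqdef]
      have hjrw : ε₂ ^ (j - 1) * ε₂ = ε₂ ^ j := by
        rw [← pow_succ]
        congr 1
        omega
      have h1 : ε₁ / ε₂ ^ (j-1) = ε₁ * ε₂ / ε₂ ^ j := by
        rw [← hjrw]
        field_simp
      rw [h1]
      ring
    -- lower bound the integral by constant D (a i)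
    have hconst : (a (i+1) - a i) * D (a i) ≤ ∫ x in (a i)..(a (i+1)), D x := by
      have hab : a i ≤ a (i+1) := hqanti (k - (i+1)) (k - i) (Nat.sub_le_sub_left (Nat.le_succ i) k)
      have hm1 := hqmem (k - i) (Nat.sub_le k i)
      have hm2 := hqmem (k - (i+1)) (Nat.sub_le k (i+1))
      have hmono : ∀ x ∈ Icc (a i) (a (i+1)), D (a i) ≤ D x := by
        intro x hx
        exact hD hm1 ⟨le_trans hm1.1 hx.1, le_trans hx.2 hm2.2⟩ hx.1
      have h := intervalIntegral.integral_mono_on (μ := MeasureTheory.volume) hab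
        (intervalIntegrable_const (c := D (a i))) (haInt i hi) hmono
      rw [intervalIntegral.integral_const, smul_eq_mul] at h
      exact h
    refine le_trans ?_ hconst
    rw [hstep]
    have hqj : a i = q j := by simp [hadef, hjdef]
    rw [hqj]
    have h1 : (1 - q j) = ε₁ / ε₂ ^ j := by simp [hqdef]
    have hkey' := hkey (q j) (lt_of_lt_of_le hqk_pos (hqanti j k (by omega))) (hqle1 j)
    have hqjk : q k ≤ q j := hqanti j k (by omega)
    have hqkval : q k = 1 - ε₁ / ε₂ ^ k := by simp [hqdef]
    calc (1 - ε₂) * (1 - ε₁ / ε₂ ^ k) * S = (1 - ε₂) * (q k * S) := by rw [hqkval]; ring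
      _ ≤ (1 - ε₂) * (q j * S) :=
          mul_le_mul_of_nonneg_left (mul_le_mul_of_nonneg_right hqjk hS0) (by linarith)
      _ ≤ (1 - ε₂) * ((1 - q j) * D (q j)) :=
          mul_le_mul_of_nonneg_left hkey' (by linarith)
      _ = (1 - ε₂) * (ε₁ / ε₂ ^ j) * D (q j) := by rw [h1]; ring
  -- combine
  have hsumge : (k : ℝ) * ((1 - ε₂) * (1 - ε₁ / ε₂ ^ k) * S)
      ≤ ∫ x in (q k)..(1 - ε₁), D x := by
    rw [← hsum]
    calc (k : ℝ) * ((1 - ε₂) * (1 - ε₁ / ε₂ ^ k) * S)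
        = ∑ _i ∈ Finset.range k, (1 - ε₂) * (1 - ε₁ / ε₂ ^ k) * S := by
          rw [Finset.sum_const, Finset.card_range, nsmul_eq_mul]
      _ ≤ ∑ i ∈ Finset.range k, ∫ x in (a i)..(a (i+1)), D x := Finset.sum_le_sum hterm
  have hsplit : ∫ x in (0:ℝ)..(1 - ε₁), D x
      = (∫ x in (0:ℝ)..(q k), D x) + ∫ x in (q k)..(1 - ε₁), D x := by
    rw [intervalIntegral.integral_add_adjacent_intervals
      (hInt 0 (q k) le_rfl (by linarith [hqle1 k, hε₁0]) hqk_pos.le)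
      (hInt (q k) (1 - ε₁) hqk_pos.le (by linarith) (hqle1 k))]
  have hfirst : 0 ≤ ∫ x in (0:ℝ)..(q k), D x := by
    apply intervalIntegral.integral_nonneg hqk_pos.le
    intro x hx
    exact hD0 x ⟨hx.1, le_trans hx.2 (hqmem k le_rfl).2⟩
  rw [hsplit]
  calc (k : ℝ) * (1 - ε₂) * (1 - ε₁ / ε₂ ^ k) * S
      = (k : ℝ) * ((1 - ε₂) * (1 - ε₁ / ε₂ ^ k) * S) := by ring
    _ ≤ ∫ x in (q k)..(1 - ε₁), D x := hsumge
    _ ≤ (∫ x in (0:ℝ)..(q k), D x) + ∫ x in (q k)..(1 - ε₁), D x := by linarith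
end

section
/- Let n ≥ 1 be an integer and ε₁ ∈ (0,1] with n·ε₁ ≥ 1, and let ε₂ ∈ (0,1]. Let X = Σ_{i=1}^n B_i where B_1, …, B_n are i.i.d. Bernoulli random variables with success probability 1/(n·ε₁). Then E[ X · 1[X > (1+ε₂)/ε₁] ] ≤ (4/ε₁) · exp(−ε₂² / (8·ε₁)). -/
open MeasureTheory ProbabilityTheory Set

set_option maxHeartbeats 1000000 in
/-- **Lemma `ManyBuyersAjLarge` (Tail 2).** For `X` a sum of `n` i.i.d. Bernoulli variables
with success probability `1/(n·ε₁)` (so `E[X] = 1/ε₁`), the contribution to `E[X]` from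
realizations exceeding `(1+ε₂)/ε₁` is at most `(4/ε₁)·exp(−ε₂²/(8·ε₁))`. -/
theorem stmt_10 {Ω : Type*} [MeasurableSpace Ω] (μ : Measure Ω) [IsProbabilityMeasure μ]
    (n : ℕ) (hn : 1 ≤ n) (ε₁ ε₂ : ℝ) (hε₁0 : 0 < ε₁) (hε₁1 : ε₁ ≤ 1)
    (hnε₁ : 1 ≤ (n : ℝ) * ε₁) (hε₂0 : 0 < ε₂) (hε₂1 : ε₂ ≤ 1)
    (B : Fin n → Ω → ℝ) (hmeas : ∀ i, Measurable (B i))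
    (h01 : ∀ i ω, B i ω = 0 ∨ B i ω = 1)
    (hindep : iIndepFun B μ)
    (hp : ∀ i, μ {ω | B i ω = 1} = ENNReal.ofReal (1 / (n * ε₁))) :
    (∫ ω, (if (1 + ε₂) / ε₁ < ∑ i, B i ω then ∑ i, B i ω else 0) ∂μ)
      ≤ 4 / ε₁ * Real.exp (-(ε₂ ^ 2 / (8 * ε₁))) := by
  have hn0 : (0:ℝ) < n := by positivity
  set p : ℝ := 1 / (n * ε₁) with hpdef
  have hp0 : 0 < p := by positivity
  have hp1 : p ≤ 1 := by rw [hpdef, div_le_one (by positivity)]; linarith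
  set X : Ω → ℝ := fun ω => ∑ i, B i ω with hXdef
  have hXmeas : Measurable X := by
    apply Finset.measurable_sum
    exact fun i _ => hmeas i
  have hB01 : ∀ i ω, 0 ≤ B i ω ∧ B i ω ≤ 1 := by
    intro i ω; rcases h01 i ω with h | h <;> rw [h] <;> norm_num
  have hX0 : ∀ ω, 0 ≤ X ω := fun ω => Finset.sum_nonneg fun i _ => (hB01 i ω).1
  have hXn : ∀ ω, X ω ≤ n := by
    intro ω
    calc X ω ≤ ∑ _i : Fin n, (1:ℝ) := Finset.sum_le_sum fun i _ => (hB01 i ω).2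
    _ = n := by simp
  have hintB : ∀ i, Integrable (B i) μ := by
    intro i
    refine Integrable.mono' (integrable_const (1:ℝ)) (hmeas i).aestronglyMeasurable ?_
    filter_upwards with ω
    rw [Real.norm_eq_abs, abs_le]
    constructor <;> linarith [(hB01 i ω).1, (hB01 i ω).2]
  have hEB : ∀ i, ∫ ω, B i ω ∂μ = p := by
    intro i
    have heq : (fun ω => B i ω) = Set.indicator {ω | B i ω = 1} (fun _ => (1:ℝ)) := by
      funext ω
      rcases h01 i ω with h | h
      · rw [h, Set.indicator_of_notMem]; simp [Set.mem_setOf_eq, h]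
      · rw [h, Set.indicator_of_mem]; exact h
    have hms : MeasurableSet {ω | B i ω = 1} := (hmeas i) (measurableSet_singleton 1)
    rw [heq, integral_indicator_const _ hms, measureReal_def, hp i, smul_eq_mul, mul_one,
      ENNReal.toReal_ofReal hp0.le]
  have hEX : ∫ ω, X ω ∂μ = 1 / ε₁ := by
    rw [hXdef]
    rw [integral_finset_sum _ fun i _ => hintB i]
    simp only [hEB, Finset.sum_const, Finset.card_univ, Fintype.card_fin, nsmul_eq_mul]
    rw [hpdef]; field_simp
  set t : ℝ := (1 + ε₂) / ε₁ with htdef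
  have ht0 : 0 < t := by positivity
  have hintX : Integrable X μ := by
    rw [hXdef]; exact integrable_finset_sum _ fun i _ => hintB i
  have hintf : Integrable (fun ω => if t < X ω then X ω else 0) μ := by
    refine Integrable.mono' (integrable_const (n:ℝ)) ?_ ?_
    · apply Measurable.aestronglyMeasurable
      exact Measurable.ite (measurableSet_lt measurable_const hXmeas) hXmeas measurable_const
    · filter_upwards with ω
      rw [Real.norm_eq_abs, abs_le]
      constructor
      · split <;> [linarith [hX0 ω]; linarith]
      · split <;> [exact hXn ω; positivity]
  by_cases hcase : (1:ℝ)/4 ≤ Real.exp (-(ε₂ ^ 2 / (8 * ε₁)))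
  · -- trivial case
    have h1 : (∫ ω, (if t < X ω then X ω else 0) ∂μ) ≤ ∫ ω, X ω ∂μ := by
      apply integral_mono hintf hintX
      intro ω
      simp only
      split
      · exact le_refl _
      · exact hX0 ω
    rw [hEX] at h1
    have h2 : 1 / ε₁ ≤ 4 / ε₁ * Real.exp (-(ε₂ ^ 2 / (8 * ε₁))) := by
      have := mul_le_mul_of_nonneg_left hcase (le_of_lt (show (0:ℝ) < 4/ε₁ by positivity))
      calc (1:ℝ)/ε₁ = 4/ε₁ * (1/4) := by ring
      _ ≤ 4 / ε₁ * Real.exp (-(ε₂ ^ 2 / (8 * ε₁))) := this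
    linarith
  · -- Chernoff case
    push_neg at hcase
    have hln : ε₂ ^ 2 / (8 * ε₁) > 1 := by
      by_contra h
      push_neg at h
      have : Real.exp (-1) ≤ Real.exp (-(ε₂ ^ 2 / (8 * ε₁))) := by
        apply Real.exp_le_exp.2; linarith
      have he : Real.exp 1 < 4 := by
        have := Real.exp_one_lt_d9; linarith
      have h4 : (1:ℝ)/4 < Real.exp (-1) := by
        rw [Real.exp_neg, lt_inv_comm₀ (by norm_num) (Real.exp_pos 1)]
        simpa using he
      linarith
    have h8 : 8 * ε₁ < ε₂ ^ 2 := (one_lt_div (by positivity : (0:ℝ) < 8 * ε₁)).1 hln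
    set l : ℝ := ε₂ / 2 with hldef
    have hl0 : 0 < l := by positivity
    have hl1 : l ≤ 1/2 := by rw [hldef]; linarith
    -- mgf of each Bernoulli
    have hexpB : ∀ i ω, Real.exp (l * B i ω) = 1 + (Real.exp l - 1) * B i ω := by
      intro i ω
      rcases h01 i ω with h | h <;> rw [h] <;> simp
    have hintE : ∀ i, Integrable (fun ω => Real.exp (l * B i ω)) μ := by
      intro i
      simp only [hexpB]
      exact (integrable_const 1).add ((hintB i).const_mul _)
    have hmgfB : ∀ i, mgf (B i) μ l = 1 + p * (Real.exp l - 1) := by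
      intro i
      rw [mgf]
      simp only [hexpB]
      rw [integral_add (integrable_const 1) ((hintB i).const_mul _), integral_const,
        integral_const_mul, hEB i]
      simp [mul_comm]
    have hXsum : X = ∑ i, B i := by funext ω; rw [hXdef]; simp
    have hmgfX : mgf X μ l = (1 + p * (Real.exp l - 1)) ^ n := by
      rw [hXsum, hindep.mgf_sum hmeas]
      simp [hmgfB]
    have hy0 : 0 ≤ p * (Real.exp l - 1) := by
      have : 1 ≤ Real.exp l := by
        rw [← Real.exp_zero]; exact Real.exp_le_exp.2 hl0.le
      nlinarith
    have hmgfle : mgf X μ l ≤ Real.exp ((1/ε₁) * (Real.exp l - 1)) := by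
      rw [hmgfX]
      calc (1 + p * (Real.exp l - 1)) ^ n
          ≤ Real.exp (p * (Real.exp l - 1)) ^ n := by
            apply pow_le_pow_left₀ (by linarith)
            linarith [Real.add_one_le_exp (p * (Real.exp l - 1))]
      _ = Real.exp (n * (p * (Real.exp l - 1))) := by rw [← Real.exp_nat_mul]
      _ = Real.exp ((1/ε₁) * (Real.exp l - 1)) := by
            congr 1
            rw [hpdef]; field_simp
    -- pointwise exponential bound
    have he1 : (2:ℝ) ≤ Real.exp 1 := by linarith [Real.add_one_le_exp 1]
    set C : ℝ := t + 1 / (Real.exp 1 * l) with hCdef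
    have hC0 : 0 < C := by positivity
    have hez : ∀ z : ℝ, Real.exp 1 * z ≤ Real.exp z := by
      intro z
      have h1 := Real.add_one_le_exp (z - 1)
      have h2 : z ≤ Real.exp (z - 1) := by linarith
      calc Real.exp 1 * z ≤ Real.exp 1 * Real.exp (z - 1) :=
            mul_le_mul_of_nonneg_left h2 (Real.exp_pos 1).le
      _ = Real.exp z := by rw [← Real.exp_add]; ring_nf
    have hpt : ∀ ω, (if t < X ω then X ω else 0) ≤ C * Real.exp (l * X ω - l * t) := by
      intro ω
      split
      case isTrue h =>
        have hz : 0 ≤ l * X ω - l * t := by nlinarith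
        have hexp1 : (1:ℝ) ≤ Real.exp (l * X ω - l * t) := by
          rw [← Real.exp_zero]; exact Real.exp_le_exp.2 hz
        have h2 : X ω - t ≤ Real.exp (l * X ω - l * t) / (Real.exp 1 * l) := by
          rw [le_div_iff₀ (by positivity)]
          calc (X ω - t) * (Real.exp 1 * l) = Real.exp 1 * (l * (X ω - t)) := by ring
          _ ≤ Real.exp (l * (X ω - t)) := hez _
          _ = Real.exp (l * X ω - l * t) := by ring_nf
        calc X ω = t + (X ω - t) := by ring
        _ ≤ t * Real.exp (l * X ω - l * t) + Real.exp (l * X ω - l * t) / (Real.exp 1 * l) :=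
            add_le_add (le_mul_of_one_le_right ht0.le hexp1) h2
        _ = C * Real.exp (l * X ω - l * t) := by rw [hCdef]; ring
      case isFalse h => positivity
    have hintR : Integrable (fun ω => C * Real.exp (l * X ω - l * t)) μ := by
      refine Integrable.mono' (integrable_const (C * Real.exp (l * n - l * t))) ?_ ?_
      · exact ((((hXmeas.const_mul l).sub_const (l * t)).exp).const_mul C).aestronglyMeasurable
      · filter_upwards with ω
        rw [Real.norm_eq_abs, abs_of_nonneg (by positivity)]
        apply mul_le_mul_of_nonneg_left _ hC0.le
        apply Real.exp_le_exp.2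
        have := hXn ω; nlinarith
    have hIR : ∫ ω, C * Real.exp (l * X ω - l * t) ∂μ
        = C * Real.exp (-(l * t)) * mgf X μ l := by
      rw [integral_const_mul]
      have hsplit : ∀ ω, Real.exp (l * X ω - l * t)
          = Real.exp (-(l * t)) * Real.exp (l * X ω) := by
        intro ω; rw [← Real.exp_add]; ring_nf
      simp_rw [hsplit]
      rw [integral_const_mul, mgf]
      ring
    have hchain : (∫ ω, (if t < X ω then X ω else 0) ∂μ)
        ≤ C * (Real.exp (-(l * t)) * Real.exp ((1/ε₁) * (Real.exp l - 1))) := by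
      calc (∫ ω, (if t < X ω then X ω else 0) ∂μ)
          ≤ ∫ ω, C * Real.exp (l * X ω - l * t) ∂μ := integral_mono hintf hintR hpt
      _ = C * Real.exp (-(l * t)) * mgf X μ l := hIR
      _ ≤ C * Real.exp (-(l * t)) * Real.exp ((1/ε₁) * (Real.exp l - 1)) :=
          mul_le_mul_of_nonneg_left hmgfle (by positivity)
      _ = C * (Real.exp (-(l * t)) * Real.exp ((1/ε₁) * (Real.exp l - 1))) := by ring
    have h9 : ε₂ ^ 2 ≤ ε₂ := by rw [sq]; exact mul_le_of_le_one_right hε₂0.le hε₂1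
    have hε₁₂ : ε₁ < ε₂ := by linarith
    have hCle : C ≤ 3 / ε₁ := by
      have h1 : t ≤ 2 / ε₁ := by
        rw [htdef]; gcongr; linarith
      have h2 : 1 / (Real.exp 1 * l) ≤ 1 / ε₁ := by
        apply one_div_le_one_div_of_le hε₁0
        rw [hldef]
        have h3 : 2 * (ε₂/2) ≤ Real.exp 1 * (ε₂/2) :=
          mul_le_mul_of_nonneg_right he1 (by positivity)
        linarith
      calc C = t + 1 / (Real.exp 1 * l) := hCdef
      _ ≤ 2 / ε₁ + 1 / ε₁ := add_le_add h1 h2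
      _ = 3 / ε₁ := by ring
    have hexpLe : Real.exp (-(l * t)) * Real.exp ((1/ε₁) * (Real.exp l - 1))
        ≤ Real.exp (-(ε₂ ^ 2 / (4 * ε₁))) := by
      rw [← Real.exp_add]
      apply Real.exp_le_exp.2
      have hb := Real.abs_exp_sub_one_sub_id_le (x := l) (by rw [abs_of_nonneg hl0.le]; linarith)
      have key : Real.exp l - 1 ≤ l + l ^ 2 := by
        have := (abs_le.1 hb).2; linarith
      have h' : (1/ε₁) * (Real.exp l - 1) ≤ (1/ε₁) * (l + l ^ 2) :=
        mul_le_mul_of_nonneg_left key (by positivity)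
      have heq : -(l * t) + (1/ε₁) * (l + l ^ 2) = -(ε₂ ^ 2 / (4 * ε₁)) := by
        rw [htdef, hldef]; field_simp; ring
      linarith
    calc (∫ ω, (if t < X ω then X ω else 0) ∂μ)
        ≤ C * (Real.exp (-(l * t)) * Real.exp ((1/ε₁) * (Real.exp l - 1))) := hchain
    _ ≤ (3 / ε₁) * Real.exp (-(ε₂ ^ 2 / (4 * ε₁))) :=
        mul_le_mul hCle hexpLe (by positivity) (by positivity)
    _ ≤ 4 / ε₁ * Real.exp (-(ε₂ ^ 2 / (8 * ε₁))) := by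
        apply mul_le_mul ?_ (Real.exp_le_exp.2 ?_) (Real.exp_pos _).le (by positivity)
        · gcongr <;> norm_num
        · rw [neg_le_neg_iff]
          apply div_le_div_of_nonneg_left (by positivity) (by positivity) (by linarith)
end

section
/- Let w¹, …, w^n be i.i.d. nonnegative real random variables with w¹ ≤ T almost surely (T > 0), let w* = max_{1≤i≤n} w^i, let 0 < t ≤ T, and let r := sup_{y ≥ t} y·Pr[w¹ > y]. Then E[ w* · 1[w* > t] ] ≤ n · (1 + ln(T/t)) · r. -/
open MeasureTheory ProbabilityTheory Set

/-- **Lemma `HigherQuantileBoundManyBuyers` (distilled).** For `n` i.i.d. nonnegative values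
bounded by `T` a.s., with `w* = max_i wⁱ`, a cutoff `0 < t ≤ T`, and `r` the (finite) best
single-buyer posted-price revenue using prices at least `t`, one has
`E[w*·1[w* > t]] ≤ n·(1 + ln(T/t))·r`. -/
theorem stmt_13 {Ω : Type*} [MeasurableSpace Ω] (μ : Measure Ω) [IsProbabilityMeasure μ]
    (n : ℕ) (hn : 0 < n) (T t : ℝ) (hT : 0 < T) (ht0 : 0 < t) (htT : t ≤ T)
    (w : Fin n → Ω → ℝ) (hmeas : ∀ i, Measurable (w i))
    (h0 : ∀ i ω, 0 ≤ w i ω)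
    (hbdd : ∀ i, ∀ᵐ ω ∂μ, w i ω ≤ T)
    (hindep : iIndepFun w μ)
    (hid : ∀ i, IdentDistrib (w i) (w ⟨0, hn⟩) μ μ)
    (r : ℝ)
    (hr : IsLUB {x | ∃ y, t ≤ y ∧ x = y * (μ {ω | y < w ⟨0, hn⟩ ω}).toReal} r) :
    (∫ ω, (if t < ⨆ i, w i ω then (⨆ i, w i ω) else 0) ∂μ)
      ≤ n * (1 + Real.log (T / t)) * r := by
  haveI : Nonempty (Fin n) := ⟨⟨0, hn⟩⟩
  set i0 : Fin n := ⟨0, hn⟩ with hi0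
  set W : Ω → ℝ := fun ω => ⨆ i, w i ω with hWdef
  set g : Ω → ℝ := fun ω => if t < W ω then W ω else 0 with hgdef
  have hWmeas : Measurable W := by
    have h1 : Measurable (Finset.univ.sup' Finset.univ_nonempty w) :=
      Finset.measurable_sup' _ (fun i _ => hmeas i)
    have h2 : W = Finset.univ.sup' Finset.univ_nonempty w := by
      funext ω; rw [Finset.sup'_apply, Finset.sup'_univ_eq_ciSup]
    rw [h2]; exact h1
  have hW0 : ∀ ω, 0 ≤ W ω := by
    intro ω
    exact le_trans (h0 i0 ω)
      (le_ciSup (f := fun i => w i ω) (Set.Finite.bddAbove (Set.finite_range _)) i0)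
  have hWT : ∀ᵐ ω ∂μ, W ω ≤ T := by
    filter_upwards [ae_all_iff.2 hbdd] with ω hω
    exact ciSup_le hω
  have hgmeas : Measurable g :=
    Measurable.ite (measurableSet_lt measurable_const hWmeas) hWmeas measurable_const
  have hg0 : ∀ ω, 0 ≤ g ω := by
    intro ω; by_cases h : t < W ω <;> simp [hgdef, h, hW0 ω]
  have hgint : Integrable g μ := by
    refine Integrable.mono' (integrable_const T) hgmeas.aestronglyMeasurable ?_
    filter_upwards [hWT] with ω hω
    rw [Real.norm_eq_abs, abs_of_nonneg (hg0 ω)]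
    by_cases h : t < W ω <;> simp [hgdef, h, hω, hT.le]
  -- key pointwise bounds
  have hprice : ∀ y, t ≤ y → y * (μ {ω | y < w i0 ω}).toReal ≤ r :=
    fun y hy => hr.1 ⟨y, hy, rfl⟩
  have hr0 : 0 ≤ r :=
    le_trans (mul_nonneg ht0.le ENNReal.toReal_nonneg) (hprice t le_rfl)
  have hub : ∀ y : ℝ, (μ {ω | y < W ω}).toReal ≤ n * (μ {ω | y < w i0 ω}).toReal := by
    intro y
    have hsub : {ω | y < W ω} ⊆ ⋃ i, {ω | y < w i ω} := by
      intro ω hω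
      have hω' : y < ⨆ i, w i ω := hω
      obtain ⟨i, hi⟩ := exists_lt_of_lt_ciSup hω'
      exact mem_iUnion.2 ⟨i, hi⟩
    have h1 : μ {ω | y < W ω} ≤ ∑ i : Fin n, μ {ω | y < w i ω} :=
      (measure_mono hsub).trans (measure_iUnion_fintype_le _ _)
    have h2 : ∀ i : Fin n, μ {ω | y < w i ω} = μ {ω | y < w i0 ω} := fun i =>
      (hid i).measure_mem_eq (s := Set.Ioi y) measurableSet_Ioi
    have h3 : μ {ω | y < W ω} ≤ (n : ENNReal) * μ {ω | y < w i0 ω} := by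
      refine h1.trans_eq ?_
      simp [h2, Finset.sum_const, mul_comm]
    calc (μ {ω | y < W ω}).toReal
        ≤ ((n : ENNReal) * μ {ω | y < w i0 ω}).toReal := by
          refine ENNReal.toReal_mono ?_ h3
          exact ENNReal.mul_ne_top (by simp) (measure_ne_top μ _)
      _ = n * (μ {ω | y < w i0 ω}).toReal := by
          rw [ENNReal.toReal_mul]; simp
  -- layer cake
  have hlc : (∫ ω, g ω ∂μ)
      = ∫ y in Set.Ioi (0:ℝ), (μ {a | y < g a}).toReal :=
    hgint.integral_eq_integral_meas_lt (Filter.Eventually.of_forall hg0)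
  set c : ℝ := (μ {ω | t < W ω}).toReal with hc
  set G : ℝ → ℝ := fun y =>
      Set.indicator (Set.Ioc 0 t) (fun _ => c) y
      + Set.indicator (Set.Ioc t T) (fun y => n * r / y) y with hGdef
  have hGint1 : Integrable (Set.indicator (Set.Ioc 0 t) (fun _ => c)) := by
    rw [integrable_indicator_iff measurableSet_Ioc]
    exact integrableOn_const measure_Ioc_lt_top.ne
  have hGint2 : Integrable (Set.indicator (Set.Ioc t T) (fun y => n * r / y)) := by
    rw [integrable_indicator_iff measurableSet_Ioc]
    have : IntervalIntegrable (fun y => n * r / y) volume t T := by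
      apply ContinuousOn.intervalIntegrable
      apply ContinuousOn.div continuousOn_const continuousOn_id
      intro x hx
      rw [Set.uIcc_of_le htT] at hx
      exact (lt_of_lt_of_le ht0 hx.1).ne'
    exact (intervalIntegrable_iff_integrableOn_Ioc_of_le htT).1 this
  have hGint : Integrable G := hGint1.add hGint2
  -- pointwise F ≤ G on Ioi 0
  have hFG : ∀ y ∈ Set.Ioi (0:ℝ), (μ {a | y < g a}).toReal ≤ G y := by
    intro y hy
    rw [Set.mem_Ioi] at hy
    rcases le_or_gt y t with hyt | hty
    · -- y ∈ Ioc 0 t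
      have hsub : {a | y < g a} ⊆ {ω | t < W ω} := by
        intro a ha
        simp only [Set.mem_setOf_eq, hgdef] at ha
        rw [Set.mem_setOf_eq]
        by_contra h
        rw [if_neg h] at ha
        exact absurd ha (not_lt.2 hy.le)
      have hle : (μ {a | y < g a}).toReal ≤ c :=
        ENNReal.toReal_mono (measure_ne_top μ _) (measure_mono hsub)
      have hmem : y ∈ Set.Ioc (0:ℝ) t := ⟨hy, hyt⟩
      have hnmem : y ∉ Set.Ioc t T := fun h => absurd h.1 (not_lt.2 hyt)
      rw [hGdef]
      simp only [Set.indicator_of_mem hmem, Set.indicator_of_notMem hnmem, add_zero]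
      exact hle
    · rcases le_or_gt y T with hyT | hTy
      · -- y ∈ Ioc t T
        have hsub : {a | y < g a} ⊆ {ω | y < W ω} := by
          intro a ha
          simp only [Set.mem_setOf_eq, hgdef] at ha
          rw [Set.mem_setOf_eq]
          by_cases h : t < W a
          · rwa [if_pos h] at ha
          · rw [if_neg h] at ha
            exact absurd ha (not_lt.2 hy.le)
        have h1 : (μ {a | y < g a}).toReal ≤ n * (μ {ω | y < w i0 ω}).toReal :=
          le_trans (ENNReal.toReal_mono (measure_ne_top μ _) (measure_mono hsub)) (hub y)
        have h2 : (μ {ω | y < w i0 ω}).toReal ≤ r / y := by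
          rw [le_div_iff₀ (ht0.trans hty)]
          calc (μ {ω | y < w i0 ω}).toReal * y = y * (μ {ω | y < w i0 ω}).toReal := by ring
            _ ≤ r := hprice y hty.le
        have hmem : y ∈ Set.Ioc t T := ⟨hty, hyT⟩
        have hnmem : y ∉ Set.Ioc (0:ℝ) t := fun h => absurd h.2 (not_le.2 hty)
        rw [hGdef]
        simp only [Set.indicator_of_mem hmem, Set.indicator_of_notMem hnmem, zero_add]
        calc (μ {a | y < g a}).toReal ≤ n * (μ {ω | y < w i0 ω}).toReal := h1
          _ ≤ n * (r / y) := mul_le_mul_of_nonneg_left h2 (Nat.cast_nonneg n)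
          _ = n * r / y := by ring
      · -- y > T
        have hnull : μ {a | y < g a} = 0 := by
          have hsub : {a | y < g a} ⊆ {ω | ¬ W ω ≤ T} := by
            intro a ha
            simp only [Set.mem_setOf_eq, hgdef] at ha
            rw [Set.mem_setOf_eq]
            by_cases h : t < W a
            · rw [if_pos h] at ha
              exact not_le.2 (hTy.trans ha)
            · rw [if_neg h] at ha
              exact absurd ha (not_lt.2 hy.le)
          exact measure_mono_null hsub (ae_iff.1 hWT)
        have hn1 : y ∉ Set.Ioc (0:ℝ) t := fun h => absurd h.2 (not_le.2 (htT.trans_lt hTy))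
        have hn2 : y ∉ Set.Ioc t T := fun h => absurd h.2 (not_le.2 hTy)
        rw [hGdef]
        simp only [Set.indicator_of_notMem hn1, Set.indicator_of_notMem hn2, add_zero]
        rw [hnull]; simp
  -- the integral of G
  have hG1 : (∫ y in Set.Ioi (0:ℝ), Set.indicator (Set.Ioc 0 t) (fun _ => c) y) = t * c := by
    rw [setIntegral_indicator measurableSet_Ioc]
    have : Set.Ioi (0:ℝ) ∩ Set.Ioc 0 t = Set.Ioc 0 t := by
      rw [Set.inter_eq_right]; exact fun x hx => hx.1
    rw [this, setIntegral_const]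
    simp [Real.volume_Ioc, ENNReal.toReal_ofReal ht0.le, ht0.le]
  have hG2 : (∫ y in Set.Ioi (0:ℝ), Set.indicator (Set.Ioc t T) (fun y => n * r / y) y)
      = n * r * Real.log (T / t) := by
    rw [setIntegral_indicator measurableSet_Ioc]
    have : Set.Ioi (0:ℝ) ∩ Set.Ioc t T = Set.Ioc t T := by
      rw [Set.inter_eq_right]; exact fun x hx => ht0.trans hx.1
    rw [this, ← intervalIntegral.integral_of_le htT]
    have : ∀ y : ℝ, n * r / y = (n * r) * (1 / y) := fun y => by ring
    simp_rw [this]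
    rw [intervalIntegral.integral_const_mul, integral_one_div]
    intro h
    rw [Set.uIcc_of_le htT] at h
    exact absurd h.1 (not_le.2 ht0)
  calc (∫ ω, (if t < ⨆ i, w i ω then (⨆ i, w i ω) else 0) ∂μ)
      = ∫ ω, g ω ∂μ := rfl
    _ = ∫ y in Set.Ioi (0:ℝ), (μ {a | y < g a}).toReal := hlc
    _ ≤ ∫ y in Set.Ioi (0:ℝ), G y := by
        refine integral_mono_of_nonneg (Filter.Eventually.of_forall fun y => ENNReal.toReal_nonneg)
          hGint.integrableOn ?_
        filter_upwards [ae_restrict_mem measurableSet_Ioi] with y hy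
        exact hFG y hy
    _ = t * c + n * r * Real.log (T / t) := by
        rw [hGdef]
        rw [integral_add hGint1.integrableOn hGint2.integrableOn, hG1, hG2]
    _ ≤ n * r + n * r * Real.log (T / t) := by
        have h1 : c ≤ n * (μ {ω | t < w i0 ω}).toReal := hub t
        have h2 : t * (μ {ω | t < w i0 ω}).toReal ≤ r := hprice t le_rfl
        have : t * c ≤ n * r := by
          calc t * c ≤ t * (n * (μ {ω | t < w i0 ω}).toReal) :=
                mul_le_mul_of_nonneg_left h1 ht0.le
            _ = n * (t * (μ {ω | t < w i0 ω}).toReal) := by ring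
            _ ≤ n * r := mul_le_mul_of_nonneg_left h2 (Nat.cast_nonneg n)
        linarith
    _ = n * (1 + Real.log (T / t)) * r := by ring
end

section
/- Let v_1, …, v_k be independent nonnegative real random variables, let t_1, …, t_k be reals with 0 ≤ t_j ≤ T for all j, and set r_j := sup_{p>0} p·Pr[v_j > p] (assumed finite). Then Var( Σ_{j=1}^k v_j · 1[v_j ≤ t_j] ) ≤ 2·T · Σ_{j=1}^k r_j. -/
open MeasureTheory ProbabilityTheory Set

/-- Single-variable bound: the variance of the truncated value is at most `2·t·r`. -/
lemma aux_var_single {Ω : Type*} [MeasurableSpace Ω] (μ : Measure Ω) [IsProbabilityMeasure μ]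
    (v : Ω → ℝ) (hmeas : Measurable v) (h0 : ∀ ω, 0 ≤ v ω)
    (t : ℝ) (ht0 : 0 ≤ t) (r : ℝ) (hr0 : 0 ≤ r)
    (hub : ∀ p : ℝ, 0 < p → p * (μ {ω | p < v ω}).toReal ≤ r) :
    variance (fun ω => if v ω ≤ t then v ω else 0) μ ≤ 2 * t * r := by
  set X : Ω → ℝ := fun ω => if v ω ≤ t then v ω else 0 with hX
  have hXmeas : Measurable X :=
    Measurable.ite (measurableSet_le hmeas measurable_const) hmeas measurable_const
  have hXnn : ∀ ω, 0 ≤ X ω := fun ω => by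
    by_cases h : v ω ≤ t <;> simp [X, h, h0 ω]
  have hXle : ∀ ω, X ω ≤ t := fun ω => by
    by_cases h : v ω ≤ t <;> simp [X, h, ht0]
  have hXlev : ∀ ω, X ω ≤ v ω := fun ω => by
    by_cases h : v ω ≤ t <;> simp [X, h, h0 ω]
  have h1 : variance X μ ≤ μ[X ^ 2] :=
    variance_le_expectation_sq hXmeas.aestronglyMeasurable
  -- express the second moment as a lintegral
  have h2 : μ[X ^ 2] = (∫⁻ ω, ENNReal.ofReal ((X ω) ^ 2) ∂μ).toReal := by
    rw [integral_eq_lintegral_of_nonneg_ae]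
    · rfl
    · exact Filter.Eventually.of_forall fun ω => sq_nonneg (X ω)
    · exact ((hXmeas.pow_const 2).aestronglyMeasurable)
  -- layer cake
  have h3 : ∫⁻ ω, ENNReal.ofReal ((X ω) ^ 2) ∂μ
      = ∫⁻ p in Ioi (0:ℝ), μ {ω | p < X ω} * ENNReal.ofReal (2 * p) := by
    have := lintegral_comp_eq_lintegral_meas_lt_mul μ
      (f := X) (g := fun s => 2 * s)
      (Filter.Eventually.of_forall hXnn) hXmeas.aemeasurable
      (fun s _ => (continuous_const.mul continuous_id).intervalIntegrable 0 s)
      (by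
        filter_upwards [ae_restrict_mem measurableSet_Ioi] with s hs
        have : (0:ℝ) < s := hs
        positivity)
    rw [← this]
    congr 1
    funext ω
    congr 1
    rw [intervalIntegral.integral_const_mul, integral_id]
    ring
  -- bound the tail integral
  have h4 : ∫⁻ p in Ioi (0:ℝ), μ {ω | p < X ω} * ENNReal.ofReal (2 * p)
      ≤ ENNReal.ofReal (2 * t * r) := by
    have hsplit : (Ioi (0:ℝ)) = Ioc 0 t ∪ Ioi t := (Ioc_union_Ioi_eq_Ioi ht0).symm
    rw [hsplit, lintegral_union measurableSet_Ioi Ioc_disjoint_Ioi_same]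
    have hzero : ∫⁻ p in Ioi t, μ {ω | p < X ω} * ENNReal.ofReal (2 * p) = 0 := by
      rw [setLIntegral_congr_fun measurableSet_Ioi
        (fun p (hp : p ∈ Ioi t) => ?_), lintegral_zero]
      have : {ω | p < X ω} = ∅ := by
        ext ω
        simp only [mem_setOf_eq, mem_empty_iff_false, iff_false, not_lt]
        exact (hXle ω).trans (le_of_lt hp)
      simp [this]
    rw [hzero, add_zero]
    calc ∫⁻ p in Ioc (0:ℝ) t, μ {ω | p < X ω} * ENNReal.ofReal (2 * p)
        ≤ ∫⁻ _ in Ioc (0:ℝ) t, ENNReal.ofReal (2 * r) := by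
          apply setLIntegral_mono' measurableSet_Ioc
          intro p hp
          have hp0 : 0 < p := hp.1
          have hsub : {ω | p < X ω} ⊆ {ω | p < v ω} := fun ω hω =>
            lt_of_lt_of_le hω (hXlev ω)
          calc μ {ω | p < X ω} * ENNReal.ofReal (2 * p)
              ≤ μ {ω | p < v ω} * ENNReal.ofReal (2 * p) := by
                exact mul_le_mul_left (measure_mono hsub) _
            _ ≤ ENNReal.ofReal (2 * r) := by
                have hfin : μ {ω | p < v ω} ≠ ⊤ := measure_ne_top μ _
                rw [← ENNReal.ofReal_toReal hfin, ← ENNReal.ofReal_mul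
                  ENNReal.toReal_nonneg]
                apply ENNReal.ofReal_le_ofReal
                have := hub p hp0
                nlinarith [ENNReal.toReal_nonneg (a := μ {ω | p < v ω})]
      _ = ENNReal.ofReal (2 * r) * ENNReal.ofReal t := by
          rw [setLIntegral_const, Real.volume_Ioc, sub_zero]
      _ = ENNReal.ofReal (2 * t * r) := by
          rw [← ENNReal.ofReal_mul (by positivity)]
          ring_nf
  calc variance X μ ≤ μ[X ^ 2] := h1
    _ = (∫⁻ ω, ENNReal.ofReal ((X ω) ^ 2) ∂μ).toReal := h2
    _ ≤ (ENNReal.ofReal (2 * t * r)).toReal := by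
        rw [h3]; exact ENNReal.toReal_mono ENNReal.ofReal_ne_top h4
    _ ≤ 2 * t * r := le_of_eq (ENNReal.toReal_ofReal (by positivity))

/-- **Variance bound on the sum of core values (inequality (varBound)).** For independent
nonnegative values `v_j` with cutoffs `0 ≤ t_j ≤ T` and finite posted-price revenues
`r_j = sup_{p>0} p·Pr[v_j > p]`, the variance of `Σ_j v_j·1[v_j ≤ t_j]` is at most
`2·T·Σ_j r_j`. -/
theorem stmt_17 {Ω : Type*} [MeasurableSpace Ω] (μ : Measure Ω) [IsProbabilityMeasure μ]
    (k : ℕ) (v : Fin k → Ω → ℝ) (hmeas : ∀ j, Measurable (v j))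
    (h0 : ∀ j ω, 0 ≤ v j ω)
    (hindep : iIndepFun v μ)
    (T : ℝ) (t : Fin k → ℝ) (ht0 : ∀ j, 0 ≤ t j) (htT : ∀ j, t j ≤ T)
    (r : Fin k → ℝ)
    (hr : ∀ j, IsLUB {x | ∃ p, 0 < p ∧ x = p * (μ {ω | p < v j ω}).toReal} (r j)) :
    variance (fun ω => ∑ j, if v j ω ≤ t j then v j ω else 0) μ
      ≤ 2 * T * ∑ j, r j := by
  set X : Fin k → Ω → ℝ := fun j ω => if v j ω ≤ t j then v j ω else 0 with hXdef
  set φ : Fin k → ℝ → ℝ := fun j x => if x ≤ t j then x else 0 with hφdef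
  have hφmeas : ∀ j, Measurable (φ j) := fun j =>
    Measurable.ite (measurableSet_le measurable_id measurable_const)
      measurable_id measurable_const
  have hXφ : ∀ j, X j = φ j ∘ v j := fun j => rfl
  have hXmeas : ∀ j, Measurable (X j) := fun j => (hφmeas j).comp (hmeas j)
  have hXbound : ∀ j, ∀ ω, |X j ω| ≤ t j := by
    intro j ω
    rw [abs_le]
    constructor
    · by_cases h : v j ω ≤ t j <;> simp [X, h, ht0 j] <;> nlinarith [h0 j ω, ht0 j]
    · by_cases h : v j ω ≤ t j <;> simp [X, h, ht0 j]
  have hmem : ∀ j, MemLp (X j) 2 μ := fun j =>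
    MemLp.of_bound (hXmeas j).aestronglyMeasurable (t j)
      (Filter.Eventually.of_forall fun ω => by
        simpa [Real.norm_eq_abs] using hXbound j ω)
  have hXindep : iIndepFun X μ := by
    have := hindep.comp φ hφmeas
    exact this
  have hsum : (fun ω => ∑ j, if v j ω ≤ t j then v j ω else 0) = ∑ j, X j := by
    funext ω
    simp [X]
  rw [hsum, IndepFun.variance_sum (fun j _ => hmem j)
    (fun i _ j _ hij => hXindep.indepFun hij)]
  -- nonnegativity of r j
  have hr0 : ∀ j, 0 ≤ r j := by
    intro j
    have h1 : (1:ℝ) * (μ {ω | 1 < v j ω}).toReal ∈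
        {x | ∃ p : ℝ, 0 < p ∧ x = p * (μ {ω | p < v j ω}).toReal} :=
      ⟨1, one_pos, rfl⟩
    have := (hr j).1 h1
    have hnn : (0:ℝ) ≤ 1 * (μ {ω | 1 < v j ω}).toReal := by positivity
    linarith
  have hub : ∀ j, ∀ p : ℝ, 0 < p → p * (μ {ω | p < v j ω}).toReal ≤ r j :=
    fun j p hp => (hr j).1 ⟨p, hp, rfl⟩
  calc ∑ j, variance (X j) μ ≤ ∑ j, 2 * T * r j := by
        apply Finset.sum_le_sum
        intro j _
        have h := aux_var_single μ (v j) (hmeas j) (h0 j) (t j) (ht0 j) (r j) (hr0 j) (hub j)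
        calc variance (X j) μ ≤ 2 * t j * r j := h
          _ ≤ 2 * T * r j := by nlinarith [hr0 j, htT j, ht0 j]
    _ = 2 * T * ∑ j, r j := by rw [Finset.mul_sum]
end

section
/- Let M > 1 and let v be a random variable with the equal-revenue distribution on [1, M], i.e., Pr[v ≤ x] = 0 for x < 1, Pr[v ≤ x] = 1 − 1/x for 1 ≤ x < M, and Pr[v ≤ M] = 1 (so v has an atom of mass 1/M at M). Then for every real a with 1 ≤ a ≤ M: E[v | v ≥ a] = a·(ln(M/a) + 1), and Var(v | v ≥ a) ≤ a²·(ln(M/a))² + 2·M·a. -/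
open MeasureTheory ProbabilityTheory Set
open scoped Interval NNReal ENNReal

namespace ER19

/-- density of the ER distribution -/
noncomputable def f : ℝ → ℝ≥0 := fun x => (x⁻¹ ^ 2).toNNReal

lemma f_meas : Measurable f :=
  ((measurable_inv.pow_const 2)).real_toNNReal

lemma f_coe (x : ℝ) : ((f x : ℝ)) = x⁻¹ ^ 2 :=
  Real.coe_toNNReal _ (sq_nonneg _)

/-- the ER law on `[1, M]` -/
noncomputable def nu (M : ℝ) : Measure ℝ :=
  ((volume.restrict (Ico 1 M)).withDensity fun x => (f x : ℝ≥0∞))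
    + (ENNReal.ofReal (1 / M)) • Measure.dirac M

lemma integrableOn_inv_sq_mul {g : ℝ → ℝ} (hg : ContinuousOn g (Icc c d)) (hc : 0 < c) :
    IntegrableOn (fun x => x⁻¹ ^ 2 * g x) (Ico c d) volume := by
  refine IntegrableOn.mono_set ?_ Ico_subset_Icc_self
  apply ContinuousOn.integrableOn_Icc
  apply ContinuousOn.mul _ hg
  apply ContinuousOn.pow
  exact ContinuousOn.inv₀ continuousOn_id (fun x hx => (lt_of_lt_of_le hc hx.1).ne')

lemma hlint {c d : ℝ} (hc : 0 < c) (hcd : c ≤ d) :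
    ∫⁻ x in Ico c d, ENNReal.ofReal (x⁻¹ ^ 2) ∂volume = ENNReal.ofReal (c⁻¹ - d⁻¹) := by
  rw [← ofReal_integral_eq_lintegral_ofReal]
  · congr 1
    have h1 : ∫ x in Ico c d, x⁻¹ ^ 2 = ∫ x in c..d, x⁻¹ ^ 2 := by
      rw [intervalIntegral.integral_of_le hcd]
      exact setIntegral_congr_set Ico_ae_eq_Ioc
    rw [h1]
    have h2 : ∀ x ∈ [[c, d]], x⁻¹ ^ 2 = x ^ (-2 : ℤ) := by
      intro x hx
      rw [zpow_neg, inv_pow]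
      norm_cast
    rw [intervalIntegral.integral_congr h2,
      integral_zpow (Or.inr ⟨by norm_num, fun h => by
        rw [Set.uIcc_of_le hcd] at h
        exact absurd h.1 (not_le.mpr hc)⟩)]
    have hd : 0 < d := lt_of_lt_of_le hc hcd
    norm_num [zpow_neg, zpow_one]
    field_simp
    ring
  · simpa [IntegrableOn] using integrableOn_inv_sq_mul (g := fun _ => (1:ℝ)) continuousOn_const hc
  · filter_upwards with x using sq_nonneg _

lemma nu_Iic (M : ℝ) (hM : 1 < M) (x : ℝ) :
    nu M (Iic x) = if x < 1 then 0 else if x < M then ENNReal.ofReal (1 - 1/x) else 1 := by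
  have hMpos : (0:ℝ) < M := lt_trans one_pos hM
  rw [nu, Measure.add_apply, withDensity_apply _ measurableSet_Iic,
    Measure.restrict_restrict measurableSet_Iic, Measure.smul_apply,
    Measure.dirac_apply' _ measurableSet_Iic]
  simp only [f]
  split_ifs with hx1 hxM
  · have : Iic x ∩ Ico 1 M = ∅ := by
      ext y; simp only [mem_inter_iff, mem_Iic, mem_Ico, mem_empty_iff_false, iff_false]
      rintro ⟨h, h1, _⟩; linarith
    rw [this]
    have : M ∉ Iic x := by simp only [mem_Iic]; push_neg; linarith
    simp [this]
  · push_neg at hx1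
    have hint : Iic x ∩ Ico 1 M = Icc 1 x := by
      ext y; simp only [mem_inter_iff, mem_Iic, mem_Ico, mem_Icc]
      constructor
      · rintro ⟨h, h1, _⟩; exact ⟨h1, h⟩
      · rintro ⟨h1, h⟩; exact ⟨h, h1, lt_of_le_of_lt h hxM⟩
    rw [hint]
    have hae : ∫⁻ y in Icc 1 x, ENNReal.ofReal ((fun t => t⁻¹ ^ 2) y) ∂volume
        = ∫⁻ y in Ico 1 x, ENNReal.ofReal (y⁻¹ ^ 2) ∂volume := by
      exact (setLIntegral_congr (Ico_ae_eq_Icc (μ := volume))).symm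
    have : ∀ y, (((y⁻¹ ^ 2).toNNReal : ℝ≥0∞)) = ENNReal.ofReal (y⁻¹ ^ 2) := by
      intro y; rw [ENNReal.ofReal]
    simp only [this]
    rw [hae, hlint one_pos hx1]
    have : M ∉ Iic x := by simp only [mem_Iic]; push_neg; exact hxM
    simp [this, one_div]
  · push_neg at hx1 hxM
    have hint : Iic x ∩ Ico 1 M = Ico 1 M := by
      rw [inter_eq_right]
      intro y hy; exact le_trans (le_of_lt hy.2) hxM
    rw [hint]
    have : ∀ y, (((y⁻¹ ^ 2).toNNReal : ℝ≥0∞)) = ENNReal.ofReal (y⁻¹ ^ 2) := by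
      intro y; rw [ENNReal.ofReal]
    simp only [this]
    rw [hlint one_pos (le_of_lt hM)]
    have hMx : M ∈ Iic x := by simpa using hxM
    simp only [hMx, indicator_of_mem, Pi.one_apply, smul_eq_mul, mul_one]
    have hnn : (0:ℝ) ≤ 1⁻¹ - M⁻¹ := by
      rw [show (1:ℝ)⁻¹ - M⁻¹ = (M - 1)/M by field_simp]
      exact div_nonneg (by linarith) (by linarith)
    rw [one_div, ← ENNReal.ofReal_add hnn (by positivity)]
    norm_num

end ER19

open ER19

/-- **Conditional moments of the equal-revenue distribution on `[1, M]`** (used in the lower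
bound, Theorem `lb`): for `1 ≤ a ≤ M`, conditioned on `v ≥ a` the mean is `a·(ln(M/a) + 1)`
and the variance is at most `a²·(ln(M/a))² + 2·M·a`. -/
theorem stmt_19 {Ω : Type*} [MeasurableSpace Ω] (μ : Measure Ω) [IsProbabilityMeasure μ]
    (M : ℝ) (hM : 1 < M) (v : Ω → ℝ) (hv : Measurable v)
    (h1 : ∀ x : ℝ, x < 1 → μ {ω | v ω ≤ x} = 0)
    (h2 : ∀ x : ℝ, 1 ≤ x → x < M → μ {ω | v ω ≤ x} = ENNReal.ofReal (1 - 1 / x))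
    (h3 : μ {ω | v ω ≤ M} = 1)
    (a : ℝ) (ha1 : 1 ≤ a) (haM : a ≤ M) :
    (∫ ω, v ω ∂(ProbabilityTheory.cond μ {ω | a ≤ v ω})) = a * (Real.log (M / a) + 1) ∧
    variance v (ProbabilityTheory.cond μ {ω | a ≤ v ω})
      ≤ a ^ 2 * Real.log (M / a) ^ 2 + 2 * M * a := by
  have ha0 : (0:ℝ) < a := lt_of_lt_of_le one_pos ha1
  have hM0 : (0:ℝ) < M := lt_trans one_pos hM
  -- identification of the law
  have hprob : IsProbabilityMeasure (μ.map v) := Measure.isProbabilityMeasure_map hv.aemeasurable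
  have hmap : μ.map v = nu M := by
    apply Measure.ext_of_Iic (μ.map v) (nu M)
    intro x
    rw [Measure.map_apply hv measurableSet_Iic, nu_Iic M hM x]
    have hpre : v ⁻¹' Iic x = {ω | v ω ≤ x} := rfl
    rw [hpre]
    split_ifs with hx1 hxM
    · exact h1 x hx1
    · push_neg at hx1; exact h2 x hx1 hxM
    · push_neg at hx1 hxM
      refine le_antisymm prob_le_one ?_
      rw [← h3]
      exact measure_mono (fun ω hω => le_trans hω hxM)
  -- the conditioning set
  set s : Set Ω := {ω | a ≤ v ω} with hs_def
  have hs_pre : s = v ⁻¹' Ici a := rfl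
  have hs_meas : MeasurableSet s := hv measurableSet_Ici
  -- measure of s
  have hIci : Ici a ∩ Ico 1 M = Ico a M := by
    ext y; simp only [mem_inter_iff, mem_Ici, mem_Ico]
    constructor
    · rintro ⟨h, _, h2⟩; exact ⟨h, h2⟩
    · rintro ⟨h, h2⟩; exact ⟨h, le_trans ha1 h, h2⟩
  have hofreal : ∀ y : ℝ, (((y⁻¹ ^ 2).toNNReal : ℝ≥0∞)) = ENNReal.ofReal (y⁻¹ ^ 2) := by
    intro y; rw [ENNReal.ofReal]
  have hmu_s : μ s = ENNReal.ofReal a⁻¹ := by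
    rw [hs_pre, ← Measure.map_apply hv measurableSet_Ici, hmap, nu, Measure.add_apply,
      withDensity_apply _ measurableSet_Ici, Measure.restrict_restrict measurableSet_Ici,
      hIci, Measure.smul_apply, Measure.dirac_apply' _ measurableSet_Ici]
    simp only [f, hofreal]
    rw [hlint ha0 haM]
    have hMa : M ∈ Ici a := haM
    simp only [hMa, indicator_of_mem, Pi.one_apply, smul_eq_mul, mul_one]
    have hnn : (0:ℝ) ≤ a⁻¹ - M⁻¹ := by
      rw [show a⁻¹ - M⁻¹ = (M - a)/(a * M) by field_simp]
      exact div_nonneg (by linarith) (by positivity)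
    rw [one_div, ← ENNReal.ofReal_add hnn (by positivity)]
    congr 1; ring
  -- restriction of nu to Ici a
  have hrestr : (nu M).restrict (Ici a)
      = ((volume.restrict (Ico a M)).withDensity fun x => (f x : ℝ≥0∞))
        + (ENNReal.ofReal (1 / M)) • Measure.dirac M := by
    rw [nu, Measure.restrict_add, restrict_withDensity measurableSet_Ici,
      Measure.restrict_restrict measurableSet_Ici, hIci, Measure.restrict_smul]
    congr 1
    classical
    rw [MeasureTheory.restrict_dirac' measurableSet_Ici]
    simp [haM]
  -- integrals over the conditional measure
  have key : ∀ g : ℝ → ℝ, Measurable g → ContinuousOn (fun x => x⁻¹ ^ 2 * g x) (Icc a M) →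
      ∫ ω in s, g (v ω) ∂μ
        = (∫ x in Ico a M, x⁻¹ ^ 2 * g x) + (1 / M) * g M := by
    intro g hg hgc
    rw [hs_pre, ← setIntegral_map measurableSet_Ici hg.aestronglyMeasurable hv.aemeasurable,
      hmap, hrestr]
    have hint1 : Integrable g
        ((volume.restrict (Ico a M)).withDensity fun x => (f x : ℝ≥0∞)) := by
      rw [integrable_withDensity_iff_integrable_smul f_meas]
      have : (fun x => f x • g x) = fun x => x⁻¹ ^ 2 * g x := by
        funext x; rw [NNReal.smul_def, smul_eq_mul, f_coe]
      rw [this]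
      exact (hgc.integrableOn_Icc).mono_set Ico_subset_Icc_self
    have hint2 : Integrable g ((ENNReal.ofReal (1 / M)) • Measure.dirac M) := by
      refine Integrable.smul_measure ?_ ENNReal.ofReal_ne_top
      refine ⟨hg.aestronglyMeasurable, ?_⟩
      rw [HasFiniteIntegral, lintegral_dirac]
      exact ENNReal.coe_lt_top
    rw [integral_add_measure hint1 hint2,
      integral_withDensity_eq_integral_smul f_meas, integral_smul_measure, integral_dirac]
    have : (fun x => f x • g x) = fun x => x⁻¹ ^ 2 * g x := by
      funext x; rw [NNReal.smul_def, smul_eq_mul, f_coe]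
    rw [this]
    congr 1
    rw [ENNReal.toReal_ofReal (by positivity), smul_eq_mul]
  -- factor from conditioning
  have hfac : ((μ s)⁻¹).toReal = a := by
    rw [hmu_s, ← ENNReal.ofReal_inv_of_pos (by positivity)]
    rw [ENNReal.toReal_ofReal (by positivity)]
    simp
  have hns : μ s ≠ 0 := by rw [hmu_s]; simp [ENNReal.ofReal_eq_zero]; positivity
  have hcond_int : ∀ g : ℝ → ℝ, Measurable g →
      (∫ ω, g (v ω) ∂(ProbabilityTheory.cond μ s))
        = ((μ s)⁻¹).toReal * ∫ ω in s, g (v ω) ∂μ := by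
    intro g hg
    rw [ProbabilityTheory.cond, integral_smul_measure, smul_eq_mul]
  -- first moment
  have hmean : (∫ ω, v ω ∂(ProbabilityTheory.cond μ s)) = a * (Real.log (M / a) + 1) := by
    have hc : ContinuousOn (fun x : ℝ => x⁻¹ ^ 2 * x) (Icc a M) := by
      apply ContinuousOn.mul _ continuousOn_id
      exact (continuousOn_id.inv₀ (fun x hx => (lt_of_lt_of_le ha0 hx.1).ne')).pow 2
    have h1 := key id measurable_id hc
    have hInt : (∫ x in Ico a M, x⁻¹ ^ 2 * x) = Real.log (M / a) := by
      have hcongr : ∫ x in Ico a M, x⁻¹ ^ 2 * x = ∫ x in Ico a M, x⁻¹ := by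
        apply setIntegral_congr_fun measurableSet_Ico
        intro x hx
        have hx0 : x ≠ 0 := (lt_of_lt_of_le ha0 hx.1).ne'
        show x⁻¹ ^ 2 * x = x⁻¹
        rw [pow_two, mul_assoc, inv_mul_cancel₀ hx0, mul_one]
      rw [hcongr]
      have : ∫ x in Ico a M, x⁻¹ = ∫ x in a..M, x⁻¹ := by
        rw [intervalIntegral.integral_of_le haM]
        exact setIntegral_congr_set Ico_ae_eq_Ioc
      rw [this, integral_inv]
      rw [Set.uIcc_of_le haM]
      intro h
      exact absurd h.1 (not_le.mpr ha0)
    rw [ProbabilityTheory.cond, integral_smul_measure, smul_eq_mul]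
    simp only [id_eq] at h1
    rw [h1, hfac, hInt]
    field_simp
  refine ⟨hmean, ?_⟩
  -- second moment
  have hsq : (∫ ω, (v ω) ^ 2 ∂(ProbabilityTheory.cond μ s)) = a * (2 * M - a) := by
    have hc : ContinuousOn (fun x : ℝ => x⁻¹ ^ 2 * x ^ 2) (Icc a M) := by
      apply ContinuousOn.mul _ (continuousOn_id.pow 2)
      exact (continuousOn_id.inv₀ (fun x hx => (lt_of_lt_of_le ha0 hx.1).ne')).pow 2
    have h1 := key (fun x => x ^ 2) (measurable_id.pow_const 2) hc
    have hInt : (∫ x in Ico a M, x⁻¹ ^ 2 * x ^ 2) = M - a := by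
      have hcongr : ∫ x in Ico a M, x⁻¹ ^ 2 * x ^ 2 = ∫ x in Ico a M, (1:ℝ) := by
        apply setIntegral_congr_fun measurableSet_Ico
        intro x hx
        have hx0 : x ≠ 0 := (lt_of_lt_of_le ha0 hx.1).ne'
        show x⁻¹ ^ 2 * x ^ 2 = 1
        rw [inv_pow, inv_mul_cancel₀ (pow_ne_zero 2 hx0)]
      rw [hcongr, setIntegral_const, smul_eq_mul, mul_one, Real.volume_real_Ico_of_le haM]
    rw [ProbabilityTheory.cond, integral_smul_measure, smul_eq_mul]
    rw [h1, hfac, hInt]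
    field_simp
    ring
  have hps : IsProbabilityMeasure (ProbabilityTheory.cond μ s) :=
    ProbabilityTheory.cond_isProbabilityMeasure hns
  have hvar := ProbabilityTheory.variance_le_expectation_sq
    (μ := ProbabilityTheory.cond μ s) (X := v) hv.aestronglyMeasurable
  have : (ProbabilityTheory.cond μ s)[v ^ 2] = a * (2 * M - a) := by
    rw [← hsq]; rfl
  rw [this] at hvar
  have hlog : 0 ≤ Real.log (M / a) := Real.log_nonneg (by rw [le_div_iff₀ ha0]; linarith)
  nlinarith [sq_nonneg (a * Real.log (M / a)), sq_nonneg a, mul_pos ha0 ha0]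
end
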